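/- Let q: ℝ^n → ℝ be convex differentiable with coordinate-wise Lipschitz gradient constants L_i, let λ* minimize q, and consider Nesterov's accelerated gradient method: λ^k = λ̂^k − η ⊙ ∇q(λ̂^k) (coordinate-wise step-sizes η_i ∈ (0, 1/L_i]), with extrapolation λ̂^{k+1} = λ^k + ((k+1)(γ^k − k)/(k γ^{k+1}))(λ^k − λ^{k−1}), γ¹ = 1, λ̂¹ = λ⁰, and γ^{k+1} = ((k+1)/2)(1+√(1+4(γ^k/k)²)). Then q(λ^k) − q(λ*) ≤ Σ_i 2(λ_i⁰ − λ_i*)²/(η_i k²) for all k ≥ 1. -/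

import Mathlib

open Finset


lemma aux_line_deriv {n : ℕ} (q : EuclideanSpace ℝ (Fin n) → ℝ)
    (g : EuclideanSpace ℝ (Fin n) → EuclideanSpace ℝ (Fin n))
    (hg : ∀ z, HasGradientAt q (g z) z)
    (x v : EuclideanSpace ℝ (Fin n)) (t : ℝ) :
    HasDerivAt (fun s : ℝ => q (x + s • v)) (∑ i, g (x + t • v) i * v i) t := by
  have hline : HasDerivAt (fun s : ℝ => x + s • v) v t := by
    simpa using ((hasDerivAt_id t).smul_const v).const_add x
  have h := ((hg (x + t • v)).hasFDerivAt).comp_hasDerivAt t hline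
  have hval : (InnerProductSpace.toDual ℝ (EuclideanSpace ℝ (Fin n)) (g (x + t • v))) v
      = ∑ i, g (x + t • v) i * v i := by
    simp [InnerProductSpace.toDual_apply_apply, PiLp.inner_apply, RCLike.inner_apply, mul_comm]
  rw [hval] at h
  exact h

lemma aux_line_convex {n : ℕ} (q : EuclideanSpace ℝ (Fin n) → ℝ)
    (hconv : ConvexOn ℝ Set.univ q) (x v : EuclideanSpace ℝ (Fin n)) :
    ConvexOn ℝ Set.univ (fun s : ℝ => q (x + s • v)) := by
  refine ⟨convex_univ, ?_⟩
  intro a _ b _ p r hp hr hpr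
  have key : x + (p * a + r * b) • v = p • (x + a • v) + r • (x + b • v) := by
    have : x = (p + r) • x := by rw [hpr, one_smul]
    rw [smul_add, smul_add, smul_smul, smul_smul]
    calc x + (p * a + r * b) • v = (p + r) • x + (p * a) • v + (r * b) • v := by
          rw [← this, add_smul]; abel
      _ = p • x + (p * a) • v + (r • x + (r * b) • v) := by rw [add_smul]; abel
  simp only [smul_eq_mul]
  rw [key]
  exact hconv.2 (Set.mem_univ _) (Set.mem_univ _) hp hr hpr

/-- first-order lower bound from convexity -/
lemma aux_tangent {n : ℕ} (q : EuclideanSpace ℝ (Fin n) → ℝ)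
    (hconv : ConvexOn ℝ Set.univ q)
    (g : EuclideanSpace ℝ (Fin n) → EuclideanSpace ℝ (Fin n))
    (hg : ∀ z, HasGradientAt q (g z) z)
    (x z : EuclideanSpace ℝ (Fin n)) :
    q x + ∑ i, g x i * (z i - x i) ≤ q z := by
  set v := z - x with hv
  have hd : HasDerivAt (fun s : ℝ => q (x + s • v)) (∑ i, g x i * v i) 0 := by
    have := aux_line_deriv q g hg x v 0
    simpa using this
  have hc := aux_line_convex q hconv x v
  have hslope := hc.le_slope_of_hasDerivAt (Set.mem_univ (0:ℝ)) (Set.mem_univ (1:ℝ))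
    one_pos hd
  rw [slope_def_field] at hslope
  simp only [one_smul, zero_smul, add_zero, sub_zero, div_one] at hslope
  have h1 : x + v = z := by rw [hv]; abel
  rw [h1] at hslope
  have : ∀ i, v i = z i - x i := fun i => by rw [hv]; simp
  calc q x + ∑ i, g x i * (z i - x i) = q x + ∑ i, g x i * v i := by
        simp_rw [this]
    _ ≤ q z := by linarith

/-- descent lemma from coordinatewise Lipschitz gradient -/
lemma aux_descent {n : ℕ} (q : EuclideanSpace ℝ (Fin n) → ℝ)
    (g : EuclideanSpace ℝ (Fin n) → EuclideanSpace ℝ (Fin n))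
    (hg : ∀ z, HasGradientAt q (g z) z)
    (L : Fin n → ℝ)
    (hLip : ∀ i, ∀ a b, |g a i - g b i| ≤ L i * |a i - b i|)
    (x y : EuclideanSpace ℝ (Fin n)) :
    q y ≤ q x + (∑ i, g x i * (y i - x i)) + (1/2) * ∑ i, L i * (y i - x i)^2 := by
  set v := y - x with hv
  have hvi : ∀ i, v i = y i - x i := fun i => by rw [hv]; simp
  set C := ∑ i, L i * (v i)^2 with hC
  set d0 := ∑ i, g x i * v i with hd0
  set χ : ℝ → ℝ := fun s => q x + s * d0 + s^2/2 * C - q (x + s • v) with hχ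
  have hder : ∀ s : ℝ, HasDerivAt χ (d0 + s * C - ∑ i, g (x + s • v) i * v i) s := by
    intro s
    have h1 : HasDerivAt (fun s : ℝ => q x + s * d0 + s^2/2 * C) (d0 + s * C) s := by
      have ha : HasDerivAt (fun s : ℝ => s * d0) d0 s := by
        simpa using (hasDerivAt_id s).mul_const d0
      have hb : HasDerivAt (fun s : ℝ => s^2/2 * C) (s * C) s := by
        have : HasDerivAt (fun s : ℝ => s^2/2) s s := by
          have := (hasDerivAt_pow 2 s).div_const 2
          simpa using this
        simpa using this.mul_const C
      exact (ha.const_add (q x)).add hb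
    exact h1.sub (aux_line_deriv q g hg x v s)
  have hmono : MonotoneOn χ (Set.Icc (0:ℝ) 1) := by
    apply monotoneOn_of_deriv_nonneg (convex_Icc 0 1)
    · exact fun s _ => (hder s).continuousAt.continuousWithinAt
    · intro s hs
      exact ((hder s).differentiableAt).differentiableWithinAt
    · intro s hs
      rw [interior_Icc] at hs
      rw [(hder s).deriv]
      have key : (∑ i, g (x + s • v) i * v i) - d0 ≤ s * C := by
        rw [hd0, hC, ← Finset.sum_sub_distrib, Finset.mul_sum]
        apply Finset.sum_le_sum
        intro i _
        have h1 : g (x + s • v) i * v i - g x i * v i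
            = (g (x + s • v) i - g x i) * v i := by ring
        rw [h1]
        have h2 : (g (x + s • v) i - g x i) * v i ≤ |g (x + s • v) i - g x i| * |v i| := by
          calc (g (x + s • v) i - g x i) * v i ≤ |(g (x + s • v) i - g x i) * v i| :=
                le_abs_self _
            _ = |g (x + s • v) i - g x i| * |v i| := abs_mul _ _
        have h3 : |(x + s • v) i - x i| = |s| * |v i| := by
          have : (x + s • v) i - x i = s * v i := by
            simp [PiLp.add_apply, PiLp.smul_apply, smul_eq_mul]
          rw [this, abs_mul]
        have h4 := hLip i (x + s • v) x
        rw [h3] at h4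
        have h5 : |s| = s := abs_of_pos hs.1
        rw [h5] at h4
        calc (g (x + s • v) i - g x i) * v i ≤ |g (x + s • v) i - g x i| * |v i| := h2
          _ ≤ (L i * (s * |v i|)) * |v i| := by
              apply mul_le_mul_of_nonneg_right h4 (abs_nonneg _)
          _ = s * (L i * |v i|^2) := by ring
          _ = s * (L i * (v i)^2) := by rw [sq_abs]
      linarith
  have h01 := hmono (Set.mem_Icc.mpr ⟨le_refl 0, zero_le_one⟩)
    (Set.mem_Icc.mpr ⟨zero_le_one, le_refl 1⟩) zero_le_one
  have hχ0 : χ 0 = 0 := by simp [hχ]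
  have hχ1 : χ 1 = q x + d0 + C/2 - q y := by
    have h1v : x + (1:ℝ) • v = y := by rw [hv]; simp
    rw [hχ]
    simp only [one_smul] at h1v ⊢
    rw [h1v]; ring
  rw [hχ0, hχ1] at h01
  have heq1 : d0 = ∑ i, g x i * (y i - x i) := by rw [hd0]; exact Finset.sum_congr rfl fun i _ => by rw [hvi]
  have heq2 : C = ∑ i, L i * (y i - x i)^2 := by rw [hC]; exact Finset.sum_congr rfl fun i _ => by rw [hvi]
  rw [heq1, heq2] at h01
  linarith

/-- one-step inequality for a gradient step with coordinatewise steps -/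
lemma aux_key {n : ℕ} (q : EuclideanSpace ℝ (Fin n) → ℝ)
    (hconv : ConvexOn ℝ Set.univ q)
    (g : EuclideanSpace ℝ (Fin n) → EuclideanSpace ℝ (Fin n))
    (hg : ∀ z, HasGradientAt q (g z) z)
    (L η : Fin n → ℝ)
    (hLip : ∀ i, ∀ a b, |g a i - g b i| ≤ L i * |a i - b i|)
    (hη : ∀ i, η i ∈ Set.Ioc 0 (1 / L i))
    (xh x z : EuclideanSpace ℝ (Fin n))
    (hx : ∀ i, x i = xh i - η i * g xh i) :
    q x - q z ≤ ∑ i, (1/2) * (1/η i) * ((xh i - z i)^2 - (x i - z i)^2) := by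
  have hL : ∀ i, 0 < L i := fun i =>
    one_div_pos.mp (lt_of_lt_of_le (hη i).1 (hη i).2)
  have hηL : ∀ i, η i * L i ≤ 1 := by
    intro i
    have h2 := (hη i).2
    have := (le_div_iff₀ (hL i)).mp h2
    linarith
  have hd := aux_descent q g hg L hLip xh x
  have ht := aux_tangent q hconv g hg xh z
  have hsum : q x - q z ≤ ∑ i, (g xh i * (x i - xh i) - g xh i * (z i - xh i)
      + (1/2) * (L i * (x i - xh i)^2)) := by
    rw [Finset.sum_add_distrib, Finset.sum_sub_distrib, ← Finset.mul_sum]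
    linarith
  refine le_trans hsum (Finset.sum_le_sum ?_)
  intro i _
  have he : 0 < η i := (hη i).1
  rw [hx i]
  have hgsq : 0 ≤ (g xh i)^2 := sq_nonneg _
  have hquad : (1/2) * (1/η i) * ((xh i - z i)^2 - (xh i - η i * g xh i - z i)^2)
      - (g xh i * ((xh i - η i * g xh i) - xh i) - g xh i * (z i - xh i)
        + (1/2) * (L i * ((xh i - η i * g xh i) - xh i)^2))
      = (1/2) * (η i) * (g xh i)^2 * (1 - L i * η i) := by
    field_simp
    ring
  have hpos : 0 ≤ (1/2) * (η i) * (g xh i)^2 * (1 - L i * η i) := by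
    have h1 : 0 ≤ 1 - L i * η i := by have := hηL i; linarith [mul_comm (η i) (L i)]
    positivity
  linarith

set_option maxHeartbeats 1000000 in
/-- Theorem 1: convergence rate `O(1/k²)` of Nesterov's accelerated gradient
method with coordinate-wise step-sizes `η i ∈ (0, 1/L i]` applied to a convex differentiable
function `q` whose gradient is coordinate-wise Lipschitz with constants `L i`. -/
theorem stmt_8 {n : ℕ}
    (q : EuclideanSpace ℝ (Fin n) → ℝ)
    (hconv : ConvexOn ℝ Set.univ q)
    (g : EuclideanSpace ℝ (Fin n) → EuclideanSpace ℝ (Fin n))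
    (hg : ∀ z, HasGradientAt q (g z) z)
    (L η : Fin n → ℝ)
    (hLip : ∀ i, ∀ a b, |g a i - g b i| ≤ L i * |a i - b i|)
    (hη : ∀ i, η i ∈ Set.Ioc 0 (1 / L i))
    (lstar : EuclideanSpace ℝ (Fin n)) (hstar : ∀ z, q lstar ≤ q z)
    (lam lamhat : ℕ → EuclideanSpace ℝ (Fin n))
    (γ : ℕ → ℝ) (hγ1 : γ 1 = 1)
    (hγ : ∀ k, 1 ≤ k →
      γ (k + 1) = ((k + 1 : ℝ) / 2) * (1 + Real.sqrt (1 + 4 * (γ k / k) ^ 2)))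
    (hinit : lamhat 1 = lam 0)
    (hstep : ∀ k, 1 ≤ k → ∀ i, lam k i = lamhat k i - η i * g (lamhat k) i)
    (hextra : ∀ k, 1 ≤ k → lamhat (k + 1) =
      lam k + (((k + 1 : ℝ) * (γ k - k)) / (k * γ (k + 1))) • (lam k - lam (k - 1))) :
    ∀ k, 1 ≤ k →
      q (lam k) - q lstar ≤ ∑ i, 2 * (lam 0 i - lstar i) ^ 2 / (η i * (k : ℝ) ^ 2) := by
  have hηpos : ∀ i, 0 < η i := fun i => (hη i).1
  have hkey : ∀ m : ℕ, 1 ≤ m → ∀ z, q (lam m) - q z ≤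
      ∑ i, (1/2) * (1/η i) * ((lamhat m i - z i)^2 - (lam m i - z i)^2) :=
    fun m hm z => aux_key q hconv g hg L η hLip hη (lamhat m) (lam m) z (hstep m hm)
  set t : ℕ → ℝ := fun m => γ m / m with htdef
  have ht1 : t 1 = 1 := by simp [htdef, hγ1]
  have htrec : ∀ m : ℕ, 1 ≤ m → t (m+1) = (1 + Real.sqrt (1 + 4 * (t m)^2)) / 2 := by
    intro m hm
    have hm1 : ((m:ℝ)+1) ≠ 0 := by positivity
    have h0 : t (m+1) = γ (m+1) / ((m:ℝ)+1) := by
      simp only [htdef]; push_cast; ring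
    rw [h0, hγ m hm]
    simp only [htdef]
    field_simp
  have hgrow : ∀ m : ℕ, 1 ≤ m → ((m:ℝ)+1)/2 ≤ t m := by
    intro m hm
    induction m, hm using Nat.le_induction with
    | base => rw [ht1]; norm_num
    | succ m hm ih =>
      rw [htrec m hm]
      have hs : 2 * t m ≤ Real.sqrt (1 + 4 * (t m)^2) := by
        have h1 : (2 * t m)^2 ≤ 1 + 4*(t m)^2 := by nlinarith
        calc 2 * t m ≤ |2 * t m| := le_abs_self _
          _ = Real.sqrt ((2*t m)^2) := (Real.sqrt_sq_eq_abs _).symm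
          _ ≤ Real.sqrt (1 + 4*(t m)^2) := Real.sqrt_le_sqrt h1
      push_cast
      linarith
  have hone : ∀ m : ℕ, 1 ≤ m → 1 ≤ t m := by
    intro m hm
    have h1 : (1:ℝ) ≤ (m:ℝ) := by exact_mod_cast hm
    linarith [hgrow m hm]
  have hrel : ∀ m : ℕ, 1 ≤ m → t (m+1) * (t (m+1) - 1) = (t m)^2 := by
    intro m hm
    rw [htrec m hm]
    have h0 : (0:ℝ) ≤ 1 + 4 * (t m)^2 := by positivity
    have hs := Real.sq_sqrt h0
    nlinarith [hs]
  have hmom : ∀ m : ℕ, 1 ≤ m → ∀ i, t (m+1) * lamhat (m+1) i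
      = t (m+1) * lam m i + (t m - 1) * (lam m i - lam (m-1) i) := by
    intro m hm i
    have hmR : (1:ℝ) ≤ (m:ℝ) := by exact_mod_cast hm
    have hmne : (m:ℝ) ≠ 0 := by linarith
    have hm1ne : ((m:ℝ)+1) ≠ 0 := by positivity
    have hTpos : (0:ℝ) < t (m+1) := lt_of_lt_of_le one_pos (hone (m+1) (by omega))
    have hTne : t (m+1) ≠ 0 := ne_of_gt hTpos
    have hγm1 : γ (m+1) = ((m:ℝ)+1) * t (m+1) := by
      simp only [htdef]; push_cast; field_simp
    have hγm : γ m = (m:ℝ) * t m := by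
      simp only [htdef]; field_simp
    have hc : t (m+1) * (((m:ℝ) + 1) * (γ m - (m:ℝ)) / ((m:ℝ) * γ (m+1))) = t m - 1 := by
      rw [hγm1, hγm]
      field_simp
    have hei : lamhat (m+1) i = lam m i
        + (((m:ℝ)+1) * (γ m - (m:ℝ)) / ((m:ℝ) * γ (m+1))) * (lam m i - lam (m-1) i) := by
      rw [hextra m hm]
      simp [PiLp.add_apply, PiLp.smul_apply, PiLp.sub_apply, smul_eq_mul]
    rw [hei]
    calc t (m+1) * (lam m i + (((m:ℝ)+1) * (γ m - (m:ℝ)) / ((m:ℝ) * γ (m+1))) * (lam m i - lam (m-1) i))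
        = t (m+1) * lam m i
          + (t (m+1) * (((m:ℝ)+1) * (γ m - (m:ℝ)) / ((m:ℝ) * γ (m+1)))) * (lam m i - lam (m-1) i) := by
          ring
      _ = t (m+1) * lam m i + (t m - 1) * (lam m i - lam (m-1) i) := by rw [hc]
  set u : ℕ → Fin n → ℝ := fun m i => t m * lam m i - (t m - 1) * lam (m-1) i - lstar i
    with hudef
  set E : ℕ → ℝ := fun m => (t m)^2 * (q (lam m) - q lstar)
      + (1/2) * ∑ i, (1/η i) * (u m i)^2 with hEdef
  have hstepE : ∀ m : ℕ, 1 ≤ m → E (m+1) ≤ E m := by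
    intro m hm
    have hT1 : 1 ≤ t (m+1) := hone (m+1) (by omega)
    have hTT : 0 ≤ t (m+1) * (t (m+1) - 1) := by nlinarith
    have h1 := hkey (m+1) (by omega) (lam m)
    have h2 := hkey (m+1) (by omega) lstar
    have e1 : t (m+1)*(t (m+1)-1) * (q (lam (m+1)) - q (lam m)) ≤ t (m+1)*(t (m+1)-1) *
        ∑ i, (1/2)*(1/η i)*((lamhat (m+1) i - lam m i)^2 - (lam (m+1) i - lam m i)^2) :=
      mul_le_mul_of_nonneg_left h1 hTT
    have e2 : t (m+1) * (q (lam (m+1)) - q lstar) ≤ t (m+1) *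
        ∑ i, (1/2)*(1/η i)*((lamhat (m+1) i - lstar i)^2 - (lam (m+1) i - lstar i)^2) :=
      mul_le_mul_of_nonneg_left h2 (by linarith)
    have hsid : t (m+1)*(t (m+1)-1) *
        (∑ i, (1/2)*(1/η i)*((lamhat (m+1) i - lam m i)^2 - (lam (m+1) i - lam m i)^2))
        + t (m+1) *
        (∑ i, (1/2)*(1/η i)*((lamhat (m+1) i - lstar i)^2 - (lam (m+1) i - lstar i)^2))
        = (1/2) * ∑ i, (1/η i) * (u m i)^2 - (1/2) * ∑ i, (1/η i) * (u (m+1) i)^2 := by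
      rw [Finset.mul_sum, Finset.mul_sum, Finset.mul_sum, Finset.mul_sum,
        ← Finset.sum_add_distrib, ← Finset.sum_sub_distrib]
      apply Finset.sum_congr rfl
      intro i _
      have hu1 : u (m+1) i = t (m+1) * lam (m+1) i - (t (m+1) - 1) * lam m i - lstar i := by
        simp only [hudef, Nat.add_sub_cancel]
      have hu0 : u m i = t (m+1) * lamhat (m+1) i - (t (m+1)-1) * lam m i - lstar i := by
        simp only [hudef]
        linear_combination - (hmom m hm i)
      rw [hu1, hu0]
      ring
    have e3 : (t (m+1))^2 * (q (lam (m+1)) - q lstar) - (t m)^2 * (q (lam m) - q lstar)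
        = t (m+1)*(t (m+1)-1) * (q (lam (m+1)) - q (lam m))
          + t (m+1) * (q (lam (m+1)) - q lstar) := by
      rw [← hrel m hm]; ring
    simp only [hEdef]
    linarith [e1, e2, e3, hsid]
  have hdescend : ∀ m : ℕ, 1 ≤ m → E m ≤ E 1 := by
    intro m hm
    induction m, hm using Nat.le_induction with
    | base => exact le_refl _
    | succ m hm ih => exact le_trans (hstepE m hm) ih
  have hE1 : E 1 ≤ (1/2) * ∑ i, (1/η i) * (lam 0 i - lstar i)^2 := by
    have h2 := hkey 1 le_rfl lstar
    rw [hinit] at h2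
    have hu1i : ∀ i, u 1 i = lam 1 i - lstar i := by
      intro i; simp [hudef, ht1]
    have hE1eq : E 1 = (q (lam 1) - q lstar)
        + (1/2) * ∑ i, (1/η i) * (lam 1 i - lstar i)^2 := by
      simp only [hEdef, ht1, one_pow, one_mul]
      congr 1
      congr 1
      exact Finset.sum_congr rfl fun i _ => by rw [hu1i i]
    have hsum : ∑ i, (1/2)*(1/η i)*((lam 0 i - lstar i)^2 - (lam 1 i - lstar i)^2)
        = (1/2) * ∑ i, (1/η i)*(lam 0 i - lstar i)^2
          - (1/2) * ∑ i, (1/η i)*(lam 1 i - lstar i)^2 := by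
      rw [Finset.mul_sum, Finset.mul_sum, ← Finset.sum_sub_distrib]
      exact Finset.sum_congr rfl fun i _ => by ring
    rw [hE1eq]
    rw [hsum] at h2
    linarith
  intro k hk
  have hkR : (1:ℝ) ≤ (k:ℝ) := by exact_mod_cast hk
  have hEk : E k ≤ (1/2) * ∑ i, (1/η i) * (lam 0 i - lstar i)^2 :=
    le_trans (hdescend k hk) hE1
  have hupos : 0 ≤ (1/2) * ∑ i, (1/η i) * (u k i)^2 := by
    apply mul_nonneg (by norm_num)
    exact Finset.sum_nonneg fun i _ =>
      mul_nonneg (le_of_lt (one_div_pos.mpr (hηpos i))) (sq_nonneg _)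
  have hVk : (t k)^2 * (q (lam k) - q lstar) ≤ (1/2) * ∑ i, (1/η i) * (lam 0 i - lstar i)^2 := by
    simp only [hEdef] at hEk
    linarith
  have hk2 : (k:ℝ)^2/4 ≤ (t k)^2 := by
    have h := hgrow k hk
    nlinarith
  have hBnn : 0 ≤ (1/2) * ∑ i, (1/η i) * (lam 0 i - lstar i)^2 := by
    apply mul_nonneg (by norm_num)
    exact Finset.sum_nonneg fun i _ =>
      mul_nonneg (le_of_lt (one_div_pos.mpr (hηpos i))) (sq_nonneg _)
  have hq : (k:ℝ)^2/4 * (q (lam k) - q lstar)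
      ≤ (1/2) * ∑ i, (1/η i) * (lam 0 i - lstar i)^2 := by
    rcases le_or_gt (q (lam k) - q lstar) 0 with h|h
    · have h1 : (k:ℝ)^2/4 * (q (lam k) - q lstar) ≤ 0 :=
        mul_nonpos_iff.mpr (Or.inl ⟨by positivity, h⟩)
      linarith
    · have h1 : (k:ℝ)^2/4 * (q (lam k) - q lstar) ≤ (t k)^2 * (q (lam k) - q lstar) :=
        mul_le_mul_of_nonneg_right hk2 h.le
      linarith
  have hKpos : (0:ℝ) < (k:ℝ)^2 := by positivity
  have hgoal : ∑ i, 2 * (lam 0 i - lstar i)^2 / (η i * (k:ℝ)^2)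
      = 4/(k:ℝ)^2 * ((1/2) * ∑ i, (1/η i) * (lam 0 i - lstar i)^2) := by
    rw [Finset.mul_sum, Finset.mul_sum]
    apply Finset.sum_congr rfl
    intro i _
    have hne : η i ≠ 0 := ne_of_gt (hηpos i)
    have hkne : (k:ℝ)^2 ≠ 0 := ne_of_gt hKpos
    field_simp
    ring
  rw [hgoal]
  rw [div_mul_eq_mul_div, le_div_iff₀ hKpos]
  nlinarith [hq]
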